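/- The fractional oriented chromatic numbers of the directed cycles of lengths 4 and 5 are 4 and 5 respectively. -/

import Mathlib

/-- An oriented graph: a directed graph with no loops and no directed 2-cycles. -/
structure OGraph (V : Type*) where
  adj : V → V → Prop
  irrefl : ∀ v, ¬ adj v v
  asymm : ∀ u v, adj u v → ¬ adj v u

/-- A homomorphism of oriented graphs. -/
def OGraph.Hom {V W : Type*} (G : OGraph V) (H : OGraph W) (f : V → W) : Prop :=
  ∀ u v, G.adj u v → H.adj (f u) (f v)

/-- `f` is a `b`-fold oriented `k`-coloring of `G`. -/
def IsFoldColoring {V : Type*} (G : OGraph V) (b k : ℕ) (f : V → Finset (Fin k)) : Prop :=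
  (∀ v, (f v).card = b) ∧
  (∀ u v, G.adj u v → Disjoint (f u) (f v)) ∧
  (∀ x y z w, G.adj x y → G.adj z w → ¬ Disjoint (f x) (f w) → Disjoint (f y) (f z))

/-- The `b`-fold oriented chromatic number. -/
noncomputable def foldChrom {V : Type*} (G : OGraph V) (b : ℕ) : ℕ :=
  sInf {k | ∃ f : V → Finset (Fin k), IsFoldColoring G b k f}

/-- The fractional oriented chromatic number: the infimum of `k/b` over all
`b`-fold oriented `k`-colorings. -/
noncomputable def fracChrom {V : Type*} (G : OGraph V) : ℝ :=
  sInf {x : ℝ | ∃ (b k : ℕ) (f : V → Finset (Fin k)),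
    0 < b ∧ IsFoldColoring G b k f ∧ x = (k : ℝ) / b}

/-- The directed cycle of length `r`. -/
def dirCycle (r : ℕ) (hr : 3 ≤ r) : OGraph (ZMod r) where
  adj u v := v = u + 1
  irrefl := by
    intro v hv
    haveI : NeZero r := ⟨by omega⟩
    have h1 : ((1 : ℕ) : ZMod r) = 0 := by
      have := left_eq_add.mp hv
      simpa using this
    rw [ZMod.natCast_eq_zero_iff] at h1
    have := Nat.le_of_dvd one_pos h1
    omega
  asymm := by
    intro u v h1 h2
    haveI : NeZero r := ⟨by omega⟩
    have : u = u + 1 + 1 := by rw [← h1]; exact h2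
    have h2' : ((2 : ℕ) : ZMod r) = 0 := by
      have := left_eq_add.mp (by rw [add_assoc] at this; exact this)
      push_cast
      simpa [one_add_one_eq_two] using this
    rw [ZMod.natCast_eq_zero_iff] at h2'
    have := Nat.le_of_dvd two_pos h2'
    omega

section Aux

/-- Pairwise-disjoint color classes force `r * b ≤ k`. -/
lemma card_lb {r b k : ℕ} [NeZero r] (f : ZMod r → Finset (Fin k))
    (hcard : ∀ v, (f v).card = b)
    (hdisj : ∀ i j : ZMod r, i ≠ j → Disjoint (f i) (f j)) : r * b ≤ k := by
  have h1 : (Finset.univ.biUnion f).card = r * b := by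
    rw [Finset.card_biUnion (fun i _ j _ hij => hdisj i j hij)]
    simp [hcard, Finset.card_univ, ZMod.card, mul_comm]
  have h2 := Finset.card_le_univ (Finset.univ.biUnion f)
  simp only [Finset.card_univ, Fintype.card_fin] at h2
  omega

lemma dist2_disjoint {r b k : ℕ} (hr : 3 ≤ r) (hb : 0 < b)
    {f : ZMod r → Finset (Fin k)} (h : IsFoldColoring (dirCycle r hr) b k f)
    (u : ZMod r) : Disjoint (f u) (f (u + 2)) := by
  obtain ⟨hcard, _, h3⟩ := h
  have hnd : ¬ Disjoint (f (u + 1)) (f (u + 1)) := by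
    rw [disjoint_self, Finset.bot_eq_empty]
    intro he
    have := hcard (u + 1)
    rw [he] at this
    simp at this
    omega
  have := h3 (u + 1) (u + 2) u (u + 1) (by show u + 2 = u + 1 + 1; ring) rfl hnd
  exact this.symm

lemma lb4 {b k : ℕ} (hb : 0 < b) (f : ZMod 4 → Finset (Fin k))
    (h : IsFoldColoring (dirCycle 4 (by norm_num)) b k f) : 4 * b ≤ k := by
  have h1 : ∀ u : ZMod 4, Disjoint (f u) (f (u + 1)) := fun u => h.2.1 u (u + 1) rfl
  have h2 : ∀ u : ZMod 4, Disjoint (f u) (f (u + 2)) := dist2_disjoint _ hb h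
  apply card_lb f h.1
  intro i j hij
  have hd : j - i = 1 ∨ j - i = 2 ∨ j - i = 3 := by
    have : j - i ≠ 0 := sub_ne_zero_of_ne (Ne.symm hij)
    revert this
    generalize j - i = d
    revert d; decide
  have hj : j = i + (j - i) := by ring
  rcases hd with hd | hd | hd
  · rw [hj, hd]; exact h1 i
  · rw [hj, hd]; exact h2 i
  · have hi : i = j + 1 := by
      rw [hj, hd, add_assoc]
      norm_num
      decide
    rw [hi]; exact (h1 j).symm

lemma lb5 {b k : ℕ} (hb : 0 < b) (f : ZMod 5 → Finset (Fin k))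
    (h : IsFoldColoring (dirCycle 5 (by norm_num)) b k f) : 5 * b ≤ k := by
  have h1 : ∀ u : ZMod 5, Disjoint (f u) (f (u + 1)) := fun u => h.2.1 u (u + 1) rfl
  have h2 : ∀ u : ZMod 5, Disjoint (f u) (f (u + 2)) := dist2_disjoint _ hb h
  apply card_lb f h.1
  intro i j hij
  have hd : j - i = 1 ∨ j - i = 2 ∨ j - i = 3 ∨ j - i = 4 := by
    have : j - i ≠ 0 := sub_ne_zero_of_ne (Ne.symm hij)
    revert this
    generalize j - i = d
    revert d; decide
  have hj : j = i + (j - i) := by ring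
  rcases hd with hd | hd | hd | hd
  · rw [hj, hd]; exact h1 i
  · rw [hj, hd]; exact h2 i
  · have hi : i = j + 2 := by
      rw [hj, hd]
      have : (3 : ZMod 5) + 2 = 0 := by decide
      rw [add_assoc, this, add_zero]
    rw [hi]; exact (h2 j).symm
  · have hi : i = j + 1 := by
      rw [hj, hd]
      have : (4 : ZMod 5) + 1 = 0 := by decide
      rw [add_assoc, this, add_zero]
    rw [hi]; exact (h1 j).symm

end Aux

theorem stmt12 :
    fracChrom (dirCycle 4 (by norm_num)) = 4 ∧ fracChrom (dirCycle 5 (by norm_num)) = 5 := by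
  have bdd4 : BddBelow {x : ℝ | ∃ (b k : ℕ) (f : ZMod 4 → Finset (Fin k)),
      0 < b ∧ IsFoldColoring (dirCycle 4 (by norm_num)) b k f ∧ x = (k : ℝ) / b} := by
    refine ⟨0, ?_⟩
    rintro x ⟨b, k, f, hb, _, rfl⟩
    positivity
  have bdd5 : BddBelow {x : ℝ | ∃ (b k : ℕ) (f : ZMod 5 → Finset (Fin k)),
      0 < b ∧ IsFoldColoring (dirCycle 5 (by norm_num)) b k f ∧ x = (k : ℝ) / b} := by
    refine ⟨0, ?_⟩
    rintro x ⟨b, k, f, hb, _, rfl⟩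
    positivity
  have mem4 : (4 : ℝ) ∈ {x : ℝ | ∃ (b k : ℕ) (f : ZMod 4 → Finset (Fin k)),
      0 < b ∧ IsFoldColoring (dirCycle 4 (by norm_num)) b k f ∧ x = (k : ℝ) / b} := by
    exact ⟨1, 4, fun v => {⟨v.val, v.val_lt⟩}, one_pos,
      ⟨by decide, fun u v h => by subst h; revert u; decide,
       fun x y z w hxy hzw => by subst hxy; subst hzw; revert x z; decide⟩, by norm_num⟩
  have mem5 : (5 : ℝ) ∈ {x : ℝ | ∃ (b k : ℕ) (f : ZMod 5 → Finset (Fin k)),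
      0 < b ∧ IsFoldColoring (dirCycle 5 (by norm_num)) b k f ∧ x = (k : ℝ) / b} := by
    exact ⟨1, 5, fun v => {⟨v.val, v.val_lt⟩}, one_pos,
      ⟨by decide, fun u v h => by subst h; revert u; decide,
       fun x y z w hxy hzw => by subst hxy; subst hzw; revert x z; decide⟩, by norm_num⟩
  constructor
  · apply le_antisymm
    · exact csInf_le bdd4 mem4
    · apply le_csInf ⟨4, mem4⟩
      rintro x ⟨b, k, f, hb, hcol, rfl⟩
      have := lb4 hb f hcol
      rw [le_div_iff₀ (by exact_mod_cast hb)]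
      exact_mod_cast this
  · apply le_antisymm
    · exact csInf_le bdd5 mem5
    · apply le_csInf ⟨5, mem5⟩
      rintro x ⟨b, k, f, hb, hcol, rfl⟩
      have := lb5 hb f hcol
      rw [le_div_iff₀ (by exact_mod_cast hb)]
      exact_mod_cast this
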